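/- For every α, β ∈ ℕ there exist complex coefficients b^{(α,β)}_{j,k,l,m,n}, indexed by tuples (j,k,l,m,n) of natural numbers with j + k + l + n ≤ α + β and j + l + m ≤ β, such that for every complex parameter ν and all smooth functions g₁, g₂ : ℝ∖{0} → ℂ one has the Leibniz-type identity 𝒰^β 𝒳^α (g₁·g₂) = Σ_{j+k+l+n ≤ α+β, j+l+m ≤ β} b^{(α,β)}_{j,k,l,m,n} · (𝒰^j 𝒳^k g₁) · ((ξ·d²/dξ²)^l (d/dξ)^m 𝒳^n g₂), where (ξ·d²/dξ²) denotes the operator sending h to the function ξ ↦ ξ·h″(ξ). -/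

import Mathlib

open Complex Finset

/-- The operator `𝒳 f (ξ) = -2 ξ f'(ξ)`. -/
noncomputable def calX (f : ℝ → ℂ) : ℝ → ℂ := fun ξ => -2 * (ξ : ℂ) * deriv f ξ

/-- The operator `𝒰 f (ξ) = i((ν²-1)/(4ξ) f(ξ) - ξ f''(ξ))`. -/
noncomputable def calU (ν : ℂ) (f : ℝ → ℂ) : ℝ → ℂ :=
  fun ξ => Complex.I * ((ν ^ 2 - 1) / (4 * (ξ : ℂ)) * f ξ - (ξ : ℂ) * deriv (deriv f) ξ)

/-- The operator `h ↦ (ξ ↦ ξ·h″(ξ))`. -/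
noncomputable def xiD2 (h : ℝ → ℂ) : ℝ → ℂ := fun ξ => (ξ : ℂ) * deriv (deriv h) ξ

namespace Leib

def S : Set ℝ := {(0 : ℝ)}ᶜ

lemma isOpen_S : IsOpen S := isOpen_compl_singleton

abbrev Sm (f : ℝ → ℂ) : Prop := ContDiffOn ℝ (⊤ : ℕ∞) f S

abbrev EqS (f g : ℝ → ℂ) : Prop := Set.EqOn f g S

lemma mem_S {ξ : ℝ} (h : ξ ≠ 0) : ξ ∈ S := h

lemma Sm.diffAt {f : ℝ → ℂ} (hf : Sm f) {ξ : ℝ} (hξ : ξ ∈ S) : DifferentiableAt ℝ f ξ :=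
  ((hf.contDiffAt (isOpen_S.mem_nhds hξ)).differentiableAt (by simp))

lemma Sm.deriv {f : ℝ → ℂ} (hf : Sm f) : Sm (deriv f) := by
  have := (contDiffOn_infty_iff_deriv_of_isOpen (𝕜 := ℝ) (f := f) isOpen_S).1 ?_
  · exact this.2
  · exact_mod_cast hf

lemma EqS.deriv {f g : ℝ → ℂ} (h : EqS f g) : EqS (deriv f) (deriv g) := fun ξ hξ =>
  Filter.EventuallyEq.deriv_eq (Filter.eventuallyEq_of_mem (isOpen_S.mem_nhds hξ) h)

lemma deriv_sum_eqS {ι : Type} (s : Finset ι) (c : ι → ℂ) (f : ι → ℝ → ℂ)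
    (hf : ∀ p ∈ s, Sm (f p)) :
    EqS (deriv (fun x => ∑ p ∈ s, c p * f p x)) (fun x => ∑ p ∈ s, c p * deriv (f p) x) := by
  intro ξ hξ
  rw [deriv_fun_sum (fun p hp => ((hf p hp).diffAt hξ).const_mul _)]
  exact Finset.sum_congr rfl fun p hp => deriv_const_mul _ ((hf p hp).diffAt hξ)

lemma Sm.ofReal_mul {f : ℝ → ℂ} (hf : Sm f) : Sm (fun x => (x : ℂ) * f x) :=
  (Complex.ofRealCLM.contDiff.contDiffOn (s := S)).mul hf

/-- interface for operators -/
structure OpOK (O : (ℝ → ℂ) → ℝ → ℂ) : Prop where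
  smooth : ∀ f, Sm f → Sm (O f)
  congr : ∀ f g, EqS f g → EqS (O f) (O g)
  lin : ∀ {ι : Type} (s : Finset ι) (c : ι → ℂ) (f : ι → ℝ → ℂ), (∀ p ∈ s, Sm (f p)) →
    EqS (O (fun x => ∑ p ∈ s, c p * f p x)) (fun x => ∑ p ∈ s, c p * O (f p) x)

lemma opOK_deriv : OpOK deriv where
  smooth := fun _ hf => hf.deriv
  congr := fun _ _ h => h.deriv
  lin := fun s c f hf => deriv_sum_eqS s c f hf

lemma opOK_calX : OpOK calX where
  smooth := fun f hf => by
    have : Sm (fun x : ℝ => (-2 : ℂ) * ((x : ℂ) * deriv f x)) :=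
      (contDiffOn_const).mul hf.deriv.ofReal_mul
    exact this.congr fun x _ => by simp [calX]; ring
  congr := fun f g h => fun ξ hξ => by simp only [calX, h.deriv hξ]
  lin := fun s c f hf => fun ξ hξ => by
    simp only [calX]
    rw [deriv_sum_eqS s c f hf hξ, Finset.mul_sum]
    exact Finset.sum_congr rfl fun p hp => by ring

lemma opOK_xiD2 : OpOK xiD2 where
  smooth := fun f hf => hf.deriv.deriv.ofReal_mul
  congr := fun f g h => fun ξ hξ => by simp only [xiD2, h.deriv.deriv hξ]
  lin := fun s c f hf => fun ξ hξ => by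
    simp only [xiD2]
    rw [deriv_sum_eqS s c f hf |>.deriv hξ,
      deriv_sum_eqS s c (fun p => deriv (f p)) (fun p hp => (hf p hp).deriv) hξ, Finset.mul_sum]
    exact Finset.sum_congr rfl fun p hp => by ring

lemma Sm_coef (ν : ℂ) : Sm (fun x : ℝ => (ν ^ 2 - 1) / (4 * (x : ℂ))) := by
  have h1 : Sm (fun x : ℝ => (4 : ℂ) * (x : ℂ)) :=
    contDiffOn_const.mul Complex.ofRealCLM.contDiff.contDiffOn
  have h3 : ∀ x ∈ S, (4 : ℂ) * (x : ℂ) ≠ 0 := fun x hx =>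
    mul_ne_zero (by norm_num) (Complex.ofReal_ne_zero.2 hx)
  have h4 : Sm (fun x : ℝ => ((4 : ℂ) * (x : ℂ))⁻¹) := h1.inv h3
  have h5 : Sm (fun x : ℝ => (ν ^ 2 - 1) * ((4 : ℂ) * (x : ℂ))⁻¹) := contDiffOn_const.mul h4
  exact h5.congr fun x _ => by rw [div_eq_mul_inv]

lemma opOK_calU (ν : ℂ) : OpOK (calU ν) where
  smooth := fun f hf => by
    have : Sm (fun x : ℝ => Complex.I * ((ν ^ 2 - 1) / (4 * (x : ℂ)) * f x -
        (x : ℂ) * deriv (deriv f) x)) :=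
      contDiffOn_const.mul (((Sm_coef ν).mul hf).sub hf.deriv.deriv.ofReal_mul)
    exact this.congr fun x _ => rfl
  congr := fun f g h => fun ξ hξ => by simp only [calU, h hξ, h.deriv.deriv hξ]
  lin := fun s c f hf => fun ξ hξ => by
    simp only [calU]
    rw [deriv_sum_eqS s c f hf |>.deriv hξ,
      deriv_sum_eqS s c (fun p => deriv (f p)) (fun p hp => (hf p hp).deriv) hξ,
      Finset.mul_sum, Finset.mul_sum, ← Finset.sum_sub_distrib, Finset.mul_sum]
    exact Finset.sum_congr rfl fun p hp => by ring

lemma Sm.sum {ι : Type} (s : Finset ι) (c : ι → ℂ) (f : ι → ℝ → ℂ)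
    (hf : ∀ p ∈ s, Sm (f p)) : Sm (fun x => ∑ p ∈ s, c p * f p x) :=
  ContDiffOn.sum fun p hp => contDiffOn_const.mul (hf p hp)

lemma OpOK.iterate {O : (ℝ → ℂ) → ℝ → ℂ} (hO : OpOK O) : ∀ n : ℕ, OpOK (O^[n]) := by
  intro n
  induction n with
  | zero => exact ⟨fun f hf => hf, fun f g h => h, fun s c f hf => fun ξ _ => rfl⟩
  | succ n ih =>
    refine ⟨?_, ?_, ?_⟩
    · intro f hf
      rw [Function.iterate_succ_apply]
      exact ih.smooth _ (hO.smooth _ hf)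
    · intro f g h
      rw [Function.iterate_succ_apply, Function.iterate_succ_apply]
      exact ih.congr _ _ (hO.congr _ _ h)
    · intro ι s c f hf
      rw [Function.iterate_succ_apply]
      have e1 : EqS (O^[n] (O fun x => ∑ p ∈ s, c p * f p x))
          (O^[n] fun x => ∑ p ∈ s, c p * O (f p) x) :=
        ih.congr _ _ (hO.lin s c f hf)
      have e2 : EqS (O^[n] fun x => ∑ p ∈ s, c p * O (f p) x)
          (fun x => ∑ p ∈ s, c p * O^[n] (O (f p)) x) :=
        ih.lin s c (fun p => O (f p)) (fun p hp => hO.smooth _ (hf p hp))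
      intro ξ hξ
      rw [e1 hξ, e2 hξ]
      exact Finset.sum_congr rfl fun p _ => by rw [← Function.iterate_succ_apply]

lemma OpOK.lin2 {O : (ℝ → ℂ) → ℝ → ℂ} (hO : OpOK O) (c₁ c₂ : ℂ) (f g : ℝ → ℂ)
    (hf : Sm f) (hg : Sm g) :
    EqS (O fun x => c₁ * f x + c₂ * g x) (fun x => c₁ * O f x + c₂ * O g x) := by
  have hfun : (fun x => c₁ * f x + c₂ * g x) =
      (fun x => ∑ p ∈ Finset.range 2, (if p = 0 then c₁ else c₂) * (if p = 0 then f else g) x) := by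
    funext x; simp [Finset.sum_range_succ]
  rw [hfun]
  intro ξ hξ
  rw [hO.lin _ _ _ (fun p _ => by split <;> assumption) hξ]
  simp [Finset.sum_range_succ]

lemma OpOK.lin3 {O : (ℝ → ℂ) → ℝ → ℂ} (hO : OpOK O) (c₁ c₂ c₃ : ℂ) (f g h : ℝ → ℂ)
    (hf : Sm f) (hg : Sm g) (hh : Sm h) :
    EqS (O fun x => c₁ * f x + c₂ * g x + c₃ * h x)
      (fun x => c₁ * O f x + c₂ * O g x + c₃ * O h x) := by
  have hfun : (fun x => c₁ * f x + c₂ * g x + c₃ * h x) =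
      (fun x => ∑ p ∈ Finset.range 3, (if p = 0 then c₁ else if p = 1 then c₂ else c₃) *
        (if p = 0 then f else if p = 1 then g else h) x) := by
    funext x; simp [Finset.sum_range_succ]
  rw [hfun]
  intro ξ hξ
  rw [hO.lin _ _ _ (fun p _ => by split <;> [skip; split] <;> assumption) hξ]
  simp [Finset.sum_range_succ]


section ptwise
variable {f g : ℝ → ℂ} {ξ : ℝ} {ν : ℂ}

lemma hOR (ξ : ℝ) : HasDerivAt (fun x : ℝ => (x : ℂ)) 1 ξ := by
  simpa using (hasDerivAt_id ξ).ofReal_comp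

lemma Sm.hd (hf : Sm f) (hξ : ξ ∈ S) : HasDerivAt f (_root_.deriv f ξ) ξ :=
  (hf.diffAt hξ).hasDerivAt

lemma hasDerivAt_calX (hf : Sm f) (hξ : ξ ∈ S) :
    HasDerivAt (calX f) (-2 * deriv f ξ + -2 * ξ * deriv (deriv f) ξ) ξ := by
  have h := ((hOR ξ).fun_mul (hf.deriv.hd hξ)).const_mul (-2 : ℂ)
  have : calX f = fun x : ℝ => (-2 : ℂ) * ((x : ℂ) * deriv f x) := by
    funext x; simp only [calX]; ring
  rw [this]
  exact h.congr_deriv (by ring)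

lemma hasDerivAt_xiD2 (hf : Sm f) (hξ : ξ ∈ S) :
    HasDerivAt (xiD2 f) (deriv (deriv f) ξ + ξ * deriv (deriv (deriv f)) ξ) ξ := by
  have h := (hOR ξ).fun_mul (hf.deriv.deriv.hd hξ)
  have : xiD2 f = fun x : ℝ => (x : ℂ) * deriv (deriv f) x := rfl
  rw [this]
  exact h.congr_deriv (by ring)

lemma hasDerivAt_coef (hν : True) (hξ : ξ ∈ S) :
    HasDerivAt (fun x : ℝ => (ν ^ 2 - 1) / (4 * (x : ℂ)))
      (-((ν ^ 2 - 1) / (4 * (ξ : ℂ) ^ 2))) ξ := by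
  have hne : (ξ : ℂ) ≠ 0 := Complex.ofReal_ne_zero.2 hξ
  have h1 : HasDerivAt (fun x : ℝ => ((x : ℂ))⁻¹) (-1 / (ξ : ℂ) ^ 2) ξ := by
    have h0 := (hasDerivAt_inv hne).comp_ofReal
    convert h0 using 1
    rw [div_eq_mul_inv]; ring
  have h2 := h1.const_mul ((ν ^ 2 - 1) / 4)
  have : (fun x : ℝ => (ν ^ 2 - 1) / (4 * (x : ℂ))) =
      fun x : ℝ => (ν ^ 2 - 1) / 4 * ((x : ℂ))⁻¹ := by
    funext x; rw [div_eq_mul_inv, div_eq_mul_inv, mul_inv]; ring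
  rw [this]
  exact h2.congr_deriv (by ring)

lemma hasDerivAt_calU (hf : Sm f) (hξ : ξ ∈ S) :
    HasDerivAt (calU ν f)
      (Complex.I * (-((ν ^ 2 - 1) / (4 * (ξ : ℂ) ^ 2)) * f ξ +
        (ν ^ 2 - 1) / (4 * (ξ : ℂ)) * deriv f ξ - deriv (deriv f) ξ -
        ξ * deriv (deriv (deriv f)) ξ)) ξ := by
  have h1 := (hasDerivAt_coef (ν := ν) trivial hξ).fun_mul (hf.hd hξ)
  have h2 := (hOR ξ).fun_mul (hf.deriv.deriv.hd hξ)
  have h3 := (h1.fun_sub h2).const_mul Complex.I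
  have : calU ν f = fun x : ℝ => Complex.I * ((ν ^ 2 - 1) / (4 * (x : ℂ)) * f x -
      (x : ℂ) * deriv (deriv f) x) := rfl
  rw [this]
  exact h3.congr_deriv (by ring)

lemma hasDerivAt_mul2 (hf : Sm f) (hg : Sm g) (hξ : ξ ∈ S) :
    HasDerivAt (fun x => f x * g x) (deriv f ξ * g ξ + f ξ * deriv g ξ) ξ :=
  (hf.hd hξ).mul (hg.hd hξ)

-- first-derivative EqS versions
lemma deriv_calX_eqS (hf : Sm f) :
    EqS (deriv (calX f)) (fun x => -2 * deriv f x + -2 * x * deriv (deriv f) x) :=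
  fun x hx => (hasDerivAt_calX hf hx).deriv

lemma deriv_mul_eqS (hf : Sm f) (hg : Sm g) :
    EqS (deriv (fun x => f x * g x)) (fun x => deriv f x * g x + f x * deriv g x) :=
  fun x hx => (hasDerivAt_mul2 hf hg hx).deriv

lemma deriv2_calX (hf : Sm f) (hξ : ξ ∈ S) :
    deriv (deriv (calX f)) ξ =
      -4 * deriv (deriv f) ξ - 2 * ξ * deriv (deriv (deriv f)) ξ := by
  rw [(deriv_calX_eqS hf).deriv hξ]
  have h1 := ((hf.deriv.hd hξ).const_mul (-2 : ℂ)).fun_add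
    (((hOR ξ).fun_mul (hf.deriv.deriv.hd hξ)).const_mul (-2 : ℂ))
  have : (fun x : ℝ => -2 * deriv f x + -2 * (x : ℂ) * deriv (deriv f) x) =
      fun x : ℝ => (-2 : ℂ) * deriv f x + (-2 : ℂ) * ((x : ℂ) * deriv (deriv f) x) := by
    funext x; ring
  rw [this, h1.deriv]; ring

lemma deriv2_mul (hf : Sm f) (hg : Sm g) (hξ : ξ ∈ S) :
    deriv (deriv (fun x => f x * g x)) ξ =
      deriv (deriv f) ξ * g ξ + 2 * deriv f ξ * deriv g ξ + f ξ * deriv (deriv g) ξ := by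
  rw [(deriv_mul_eqS hf hg).deriv hξ]
  have h1 := ((hf.deriv.hd hξ).fun_mul (hg.hd hξ)).fun_add ((hf.hd hξ).fun_mul (hg.deriv.hd hξ))
  rw [h1.deriv]; ring

-- commutators, pointwise on S
lemma commXU (hf : Sm f) (hξ : ξ ∈ S) :
    calX (calU ν f) ξ = calU ν (calX f) ξ + 2 * calU ν f ξ := by
  have hne : (ξ : ℂ) ≠ 0 := Complex.ofReal_ne_zero.2 hξ
  have h1 : calX (calU ν f) ξ = -2 * (ξ : ℂ) * deriv (calU ν f) ξ := rfl
  rw [h1, (hasDerivAt_calU hf hξ).deriv]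
  have h2 : calU ν (calX f) ξ = Complex.I * ((ν ^ 2 - 1) / (4 * (ξ : ℂ)) * calX f ξ -
      (ξ : ℂ) * deriv (deriv (calX f)) ξ) := rfl
  rw [h2, deriv2_calX hf hξ]
  simp only [calX, calU]
  field_simp
  ring

lemma commXD (hf : Sm f) (hξ : ξ ∈ S) :
    calX (deriv f) ξ = deriv (calX f) ξ + 2 * deriv f ξ := by
  rw [(deriv_calX_eqS hf) hξ]
  simp only [calX]; ring

lemma commXK (hf : Sm f) (hξ : ξ ∈ S) :
    calX (xiD2 f) ξ = xiD2 (calX f) ξ + 2 * xiD2 f ξ := by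
  have h1 : calX (xiD2 f) ξ = -2 * (ξ : ℂ) * deriv (xiD2 f) ξ := rfl
  rw [h1, (hasDerivAt_xiD2 hf hξ).deriv]
  have h2 : xiD2 (calX f) ξ = (ξ : ℂ) * deriv (deriv (calX f)) ξ := rfl
  rw [h2, deriv2_calX hf hξ]
  simp only [xiD2]; ring

lemma commDK (hf : Sm f) (hξ : ξ ∈ S) :
    deriv (xiD2 f) ξ = xiD2 (deriv f) ξ + deriv (deriv f) ξ := by
  rw [(hasDerivAt_xiD2 hf hξ).deriv]
  have : xiD2 (deriv f) ξ = (ξ : ℂ) * deriv (deriv (deriv f)) ξ := rfl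
  rw [this]; ring

lemma prodX (hf : Sm f) (hg : Sm g) (hξ : ξ ∈ S) :
    calX (fun x => f x * g x) ξ = calX f ξ * g ξ + f ξ * calX g ξ := by
  have h1 : calX (fun x => f x * g x) ξ = -2 * (ξ : ℂ) * deriv (fun x => f x * g x) ξ := rfl
  rw [h1, deriv_mul_eqS hf hg hξ]
  simp only [calX]; ring

lemma prodU (hf : Sm f) (hg : Sm g) (hξ : ξ ∈ S) :
    calU ν (fun x => f x * g x) ξ =
      calU ν f ξ * g ξ + Complex.I * (calX f ξ * deriv g ξ) -
        Complex.I * (f ξ * xiD2 g ξ) := by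
  have h1 : calU ν (fun x => f x * g x) ξ = Complex.I *
      ((ν ^ 2 - 1) / (4 * (ξ : ℂ)) * (f ξ * g ξ) -
        (ξ : ℂ) * deriv (deriv (fun x => f x * g x)) ξ) := rfl
  rw [h1, deriv2_mul hf hg hξ]
  simp only [calU, calX, xiD2]; ring

end ptwise

section genL

def shiftCoef (a : ℕ → ℂ) (c : ℂ) : ℕ → ℂ := fun i => (if i = 0 then 0 else a (i - 1)) + c * a i

lemma shiftCoef_zero (a : ℕ → ℂ) (c : ℂ) (n : ℕ) (ha0 : ∀ i, n < i → a i = 0) :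
    ∀ i, n + 1 < i → shiftCoef a c i = 0 := by
  intro i hi
  have h1 : ¬ i = 0 := by omega
  simp only [shiftCoef, if_neg h1, ha0 i (by omega), ha0 (i - 1) (by omega)]
  ring

lemma shift_sum (a : ℕ → ℂ) (c : ℂ) (t : ℕ → ℂ) (n : ℕ) (ha0 : ∀ i, n < i → a i = 0) :
    ∑ i ∈ range (n + 1 + 1), shiftCoef a c i * t i =
      (∑ i ∈ range (n + 1), a i * t (i + 1)) + c * ∑ i ∈ range (n + 1), a i * t i := by
  have h1 : ∀ i ∈ range (n + 2), shiftCoef a c i * t i =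
      (if i = 0 then 0 else a (i - 1)) * t i + c * (a i * t i) := fun i _ => by
    simp only [shiftCoef]; ring
  rw [Finset.sum_congr rfl h1, Finset.sum_add_distrib]
  congr 1
  · rw [Finset.sum_range_succ' (fun i => (if i = 0 then 0 else a (i - 1)) * t i) (n + 1)]
    simp [Nat.succ_ne_zero]
  · rw [Finset.sum_range_succ, ha0 (n + 1) (by omega), Finset.mul_sum]
    simp

/-- `O^[n] (P f) = Σ a i • P (O^[i] f)` given `O (P f) = P (O f) + c • P f`. -/
lemma genL_right {O : (ℝ → ℂ) → ℝ → ℂ} {P : ℂ → (ℝ → ℂ) → ℝ → ℂ} {c : ℂ}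
    (hO : OpOK O) (hP : ∀ ν f, Sm f → Sm (P ν f))
    (comm : ∀ ν f, Sm f → ∀ ξ ∈ S, O (P ν f) ξ = P ν (O f) ξ + c * P ν f ξ) :
    ∀ n : ℕ, ∃ a : ℕ → ℂ, (∀ i, n < i → a i = 0) ∧ ∀ ν f, Sm f → ∀ ξ ∈ S,
      O^[n] (P ν f) ξ = ∑ i ∈ range (n + 1), a i * P ν (O^[i] f) ξ := by
  intro n
  induction n with
  | zero =>
    refine ⟨fun i => if i = 0 then 1 else 0, fun i hi => if_neg (by omega), ?_⟩
    intro ν f hf ξ hξ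
    simp
  | succ n ih =>
    obtain ⟨a, ha0, ha⟩ := ih
    refine ⟨shiftCoef a c, shiftCoef_zero a c n ha0, ?_⟩
    intro ν f hf ξ hξ
    rw [Function.iterate_succ_apply]
    have e1 : EqS (O (P ν f)) (fun x => 1 * P ν (O f) x + c * P ν f x) := by
      intro x hx; rw [comm ν f hf x hx]; ring
    have e2 : O^[n] (O (P ν f)) ξ = O^[n] (fun x => 1 * P ν (O f) x + c * P ν f x) ξ :=
      (hO.iterate n).congr _ _ e1 hξ
    have e3 : O^[n] (fun x => 1 * P ν (O f) x + c * P ν f x) ξ =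
        1 * O^[n] (P ν (O f)) ξ + c * O^[n] (P ν f) ξ :=
      (hO.iterate n).lin2 1 c (P ν (O f)) (P ν f)
        (hP ν _ (hO.smooth _ hf)) (hP ν _ hf) hξ
    rw [e2, e3, one_mul, ha ν (O f) (hO.smooth _ hf) ξ hξ, ha ν f hf ξ hξ,
      shift_sum a c (fun i => P ν (O^[i] f) ξ) n ha0]
    congr 1

/-- `O ν (P^[n] f) = Σ a i • P^[i] (O ν f)` given `O ν (P f) = P (O ν f) + c • O ν f`. -/
lemma genL_left {O : ℂ → (ℝ → ℂ) → ℝ → ℂ} {P : (ℝ → ℂ) → ℝ → ℂ} {c : ℂ}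
    (hP : OpOK P) (hO : ∀ ν f, Sm f → Sm (O ν f))
    (comm : ∀ ν f, Sm f → ∀ ξ ∈ S, O ν (P f) ξ = P (O ν f) ξ + c * O ν f ξ) :
    ∀ n : ℕ, ∃ a : ℕ → ℂ, (∀ i, n < i → a i = 0) ∧ ∀ ν f, Sm f → ∀ ξ ∈ S,
      O ν (P^[n] f) ξ = ∑ i ∈ range (n + 1), a i * P^[i] (O ν f) ξ := by
  intro n
  induction n with
  | zero =>
    refine ⟨fun i => if i = 0 then 1 else 0, fun i hi => if_neg (by omega), ?_⟩
    intro ν f hf ξ hξ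
    simp
  | succ n ih =>
    obtain ⟨a, ha0, ha⟩ := ih
    refine ⟨shiftCoef a c, shiftCoef_zero a c n ha0, ?_⟩
    intro ν f hf ξ hξ
    rw [Function.iterate_succ_apply]
    rw [ha ν (P f) (hP.smooth _ hf) ξ hξ]
    have key : ∀ i, P^[i] (O ν (P f)) ξ = 1 * P^[i + 1] (O ν f) ξ + c * P^[i] (O ν f) ξ := by
      intro i
      have e1 : EqS (O ν (P f)) (fun x => 1 * P (O ν f) x + c * O ν f x) := by
        intro x hx; rw [comm ν f hf x hx]; ring
      have e2 : P^[i] (O ν (P f)) ξ = P^[i] (fun x => 1 * P (O ν f) x + c * O ν f x) ξ :=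
        (hP.iterate i).congr _ _ e1 hξ
      have e3 : P^[i] (fun x => 1 * P (O ν f) x + c * O ν f x) ξ =
          1 * P^[i] (P (O ν f)) ξ + c * P^[i] (O ν f) ξ :=
        (hP.iterate i).lin2 1 c (P (O ν f)) (O ν f) (hP.smooth _ (hO ν f hf)) (hO ν f hf) hξ
      rw [e2, e3, ← Function.iterate_succ_apply]
    have hsplit : ∑ i ∈ range (n + 1), a i * P^[i] (O ν (P f)) ξ =
        (∑ i ∈ range (n + 1), a i * P^[i + 1] (O ν f) ξ) +
          c * ∑ i ∈ range (n + 1), a i * P^[i] (O ν f) ξ := by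
      rw [Finset.mul_sum, ← Finset.sum_add_distrib]
      exact Finset.sum_congr rfl fun i _ => by rw [key i]; ring
    rw [hsplit, shift_sum a c (fun i => P^[i] (O ν f) ξ) n ha0]

end genL


section inst

/-- `X^[k] (U f) = Σ a s • U (X^[s] f)` -/
lemma LXU : ∀ k : ℕ, ∃ a : ℕ → ℂ, (∀ i, k < i → a i = 0) ∧ ∀ ν f, Sm f → ∀ ξ ∈ S,
    calX^[k] (calU ν f) ξ = ∑ s ∈ range (k + 1), a s * calU ν (calX^[s] f) ξ :=
  genL_right opOK_calX (fun ν f hf => (opOK_calU ν).smooth f hf)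
    (fun ν f hf ξ hξ => commXU hf hξ)

/-- `X^[n] (D f) = Σ a t • D (X^[t] f)` -/
lemma LXD : ∀ n : ℕ, ∃ a : ℕ → ℂ, (∀ i, n < i → a i = 0) ∧ ∀ f, Sm f → ∀ ξ ∈ S,
    calX^[n] (deriv f) ξ = ∑ t ∈ range (n + 1), a t * deriv (calX^[t] f) ξ := by
  intro n
  obtain ⟨a, h0, h⟩ := genL_right (P := fun _ => deriv) opOK_calX
    (fun ν f hf => hf.deriv) (fun ν f hf ξ hξ => commXD hf hξ) n
  exact ⟨a, h0, fun f hf ξ hξ => h 0 f hf ξ hξ⟩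

/-- `X^[n] (K f) = Σ a u • K (X^[u] f)` -/
lemma LXK : ∀ n : ℕ, ∃ a : ℕ → ℂ, (∀ i, n < i → a i = 0) ∧ ∀ f, Sm f → ∀ ξ ∈ S,
    calX^[n] (xiD2 f) ξ = ∑ u ∈ range (n + 1), a u * xiD2 (calX^[u] f) ξ := by
  intro n
  obtain ⟨a, h0, h⟩ := genL_right (P := fun _ => xiD2) opOK_calX
    (fun ν f hf => opOK_xiD2.smooth f hf) (fun ν f hf ξ hξ => commXK hf hξ) n
  exact ⟨a, h0, fun f hf ξ hξ => h 0 f hf ξ hξ⟩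

/-- `U (X^[n] f) = Σ a i • X^[i] (U f)` -/
lemma LUX : ∀ n : ℕ, ∃ a : ℕ → ℂ, (∀ i, n < i → a i = 0) ∧ ∀ ν f, Sm f → ∀ ξ ∈ S,
    calU ν (calX^[n] f) ξ = ∑ i ∈ range (n + 1), a i * calX^[i] (calU ν f) ξ :=
  genL_left (c := -2) opOK_calX (fun ν f hf => (opOK_calU ν).smooth f hf)
    (fun ν f hf ξ hξ => by rw [commXU hf hξ]; ring)

/-- `D^[m] (K f) = K (D^[m] f) + m • D^[m+1] f` -/
lemma LDK : ∀ m : ℕ, ∀ f, Sm f → ∀ ξ ∈ S,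
    deriv^[m] (xiD2 f) ξ = xiD2 (deriv^[m] f) ξ + (m : ℂ) * deriv^[m + 1] f ξ := by
  intro m
  induction m with
  | zero => intro f hf ξ hξ; simp
  | succ m ih =>
    intro f hf ξ hξ
    rw [Function.iterate_succ_apply]
    have e1 : EqS (deriv (xiD2 f)) (fun x => 1 * xiD2 (deriv f) x + 1 * deriv (deriv f) x) := by
      intro x hx; rw [commDK hf hx]; ring
    have e2 : deriv^[m] (deriv (xiD2 f)) ξ =
        deriv^[m] (fun x => 1 * xiD2 (deriv f) x + 1 * deriv (deriv f) x) ξ :=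
      (opOK_deriv.iterate m).congr _ _ e1 hξ
    have e3 : deriv^[m] (fun x => 1 * xiD2 (deriv f) x + 1 * deriv (deriv f) x) ξ =
        1 * deriv^[m] (xiD2 (deriv f)) ξ + 1 * deriv^[m] (deriv (deriv f)) ξ :=
      (opOK_deriv.iterate m).lin2 1 1 _ _ (opOK_xiD2.smooth _ hf.deriv) hf.deriv.deriv hξ
    rw [e2, e3, ih (deriv f) hf.deriv ξ hξ]
    have h4 : deriv^[m] (deriv f) = deriv^[m + 1] f := (Function.iterate_succ_apply deriv m f).symm
    have h5 : deriv^[m + 1] (deriv f) = deriv^[m + 1 + 1] f :=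
      (Function.iterate_succ_apply deriv (m + 1) f).symm
    have h6 : deriv^[m] (deriv (deriv f)) = deriv^[m + 1 + 1] f := by
      rw [show deriv (deriv f) = deriv^[2] f from rfl, ← Function.iterate_add_apply]
    rw [h4, h5, h6]
    push_cast
    ring

end inst


section sum5

noncomputable def sum5 (B1 B2 B3 B4 B5 : ℕ) (F : ℕ → ℕ → ℕ → ℕ → ℕ → ℂ) : ℂ :=
  ∑ j ∈ range B1, ∑ k ∈ range B2, ∑ l ∈ range B3, ∑ m ∈ range B4, ∑ n ∈ range B5, F j k l m n

variable {B1 B2 B3 B4 B5 : ℕ}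

lemma sum5_congr {F G : ℕ → ℕ → ℕ → ℕ → ℕ → ℂ}
    (h : ∀ j k l m n, j < B1 → k < B2 → l < B3 → m < B4 → n < B5 → F j k l m n = G j k l m n) :
    sum5 B1 B2 B3 B4 B5 F = sum5 B1 B2 B3 B4 B5 G := by
  refine Finset.sum_congr rfl fun j hj => Finset.sum_congr rfl fun k hk =>
    Finset.sum_congr rfl fun l hl => Finset.sum_congr rfl fun m hm =>
    Finset.sum_congr rfl fun n hn => ?_
  exact h j k l m n (mem_range.1 hj) (mem_range.1 hk) (mem_range.1 hl) (mem_range.1 hm)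
    (mem_range.1 hn)

lemma sum5_zero : sum5 B1 B2 B3 B4 B5 (fun _ _ _ _ _ => 0) = 0 := by
  simp [sum5]

lemma sum5_add {F G : ℕ → ℕ → ℕ → ℕ → ℕ → ℂ} :
    sum5 B1 B2 B3 B4 B5 (fun j k l m n => F j k l m n + G j k l m n) =
      sum5 B1 B2 B3 B4 B5 F + sum5 B1 B2 B3 B4 B5 G := by
  simp [sum5, Finset.sum_add_distrib]

lemma sum5_smul {c : ℂ} {F : ℕ → ℕ → ℕ → ℕ → ℕ → ℂ} :
    sum5 B1 B2 B3 B4 B5 (fun j k l m n => c * F j k l m n) = c * sum5 B1 B2 B3 B4 B5 F := by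
  simp [sum5, ← Finset.mul_sum]

lemma sum5_sum {ι : Type} (s : Finset ι) (H : ι → ℕ → ℕ → ℕ → ℕ → ℕ → ℂ) :
    sum5 B1 B2 B3 B4 B5 (fun j k l m n => ∑ p ∈ s, H p j k l m n) =
      ∑ p ∈ s, sum5 B1 B2 B3 B4 B5 (H p) := by
  classical
  induction s using Finset.induction with
  | empty => simpa using sum5_zero
  | insert _ _ hp ih =>
    rw [Finset.sum_insert hp, ← ih, ← sum5_add]
    congr 1
    funext j k l m n
    rw [Finset.sum_insert hp]

lemma sum5_delta {j0 k0 l0 m0 n0 : ℕ} (h1 : j0 < B1) (h2 : k0 < B2) (h3 : l0 < B3)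
    (h4 : m0 < B4) (h5 : n0 < B5) (v : ℕ → ℕ → ℕ → ℕ → ℕ → ℂ) :
    sum5 B1 B2 B3 B4 B5 (fun j k l m n =>
      if j = j0 ∧ k = k0 ∧ l = l0 ∧ m = m0 ∧ n = n0 then v j k l m n else 0) =
      v j0 k0 l0 m0 n0 := by
  simp [sum5, ite_and, Finset.sum_ite_eq', h1, h2, h3, h4, h5]

lemma sum_range_ext {r R : ℕ} (G : ℕ → ℂ) (h0 : ∀ i, r ≤ i → G i = 0) (h : r ≤ R) :
    ∑ i ∈ range R, G i = ∑ i ∈ range r, G i :=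
  (Finset.sum_subset (Finset.range_subset_range.2 h) fun x _ hx =>
    h0 x (by simpa using hx)).symm

lemma sum5_ext {C1 C2 C3 C4 C5 : ℕ} {F : ℕ → ℕ → ℕ → ℕ → ℕ → ℂ}
    (e1 : B1 ≤ C1) (e2 : B2 ≤ C2) (e3 : B3 ≤ C3) (e4 : B4 ≤ C4) (e5 : B5 ≤ C5)
    (h0 : ∀ j k l m n, (B1 ≤ j ∨ B2 ≤ k ∨ B3 ≤ l ∨ B4 ≤ m ∨ B5 ≤ n) → F j k l m n = 0) :
    sum5 C1 C2 C3 C4 C5 F = sum5 B1 B2 B3 B4 B5 F := by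
  unfold sum5
  rw [sum_range_ext _ (fun j hj => by
    exact Finset.sum_eq_zero fun k _ => Finset.sum_eq_zero fun l _ =>
      Finset.sum_eq_zero fun m _ => Finset.sum_eq_zero fun n _ => h0 _ _ _ _ _ (Or.inl hj)) e1]
  refine Finset.sum_congr rfl fun j _ => ?_
  rw [sum_range_ext _ (fun k hk => by
    exact Finset.sum_eq_zero fun l _ => Finset.sum_eq_zero fun m _ =>
      Finset.sum_eq_zero fun n _ => h0 _ _ _ _ _ (Or.inr (Or.inl hk))) e2]
  refine Finset.sum_congr rfl fun k _ => ?_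
  rw [sum_range_ext _ (fun l hl => by
    exact Finset.sum_eq_zero fun m _ => Finset.sum_eq_zero fun n _ =>
      h0 _ _ _ _ _ (Or.inr (Or.inr (Or.inl hl)))) e3]
  refine Finset.sum_congr rfl fun l _ => ?_
  rw [sum_range_ext _ (fun m hm => by
    exact Finset.sum_eq_zero fun n _ =>
      h0 _ _ _ _ _ (Or.inr (Or.inr (Or.inr (Or.inl hm))))) e4]
  refine Finset.sum_congr rfl fun m _ => ?_
  exact sum_range_ext _ (fun n hn => h0 _ _ _ _ _ (Or.inr (Or.inr (Or.inr (Or.inr hn))))) e5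

end sum5


section good

abbrev Goodf := ℂ → (ℝ → ℂ) → (ℝ → ℂ) → ℝ → ℂ

noncomputable def tm (j k l m n : ℕ) : Goodf := fun ν g₁ g₂ ξ =>
  (calU ν)^[j] (calX^[k] g₁) ξ * xiD2^[l] (deriv^[m] (calX^[n] g₂)) ξ

def Good (α β : ℕ) (Φ : Goodf) : Prop :=
  ∃ b : ℕ → ℕ → ℕ → ℕ → ℕ → ℂ,
    (∀ j k l m n, ¬(j + k + l + n ≤ α + β ∧ j + l + m ≤ β) → b j k l m n = 0) ∧
    ∀ ν g₁ g₂, Sm g₁ → Sm g₂ → ∀ ξ, ξ ∈ S →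
      Φ ν g₁ g₂ ξ = sum5 (β + 1) (α + β + 1) (β + 1) (β + 1) (α + β + 1)
        (fun j k l m n => b j k l m n * (calU ν)^[j] (calX^[k] g₁) ξ *
          xiD2^[l] (deriv^[m] (calX^[n] g₂)) ξ)

lemma good_congr {α β : ℕ} {Φ Ψ : Goodf}
    (h : ∀ ν g₁ g₂, Sm g₁ → Sm g₂ → ∀ ξ, ξ ∈ S → Φ ν g₁ g₂ ξ = Ψ ν g₁ g₂ ξ)
    (hΨ : Good α β Ψ) : Good α β Φ := by
  obtain ⟨b, hb0, hb⟩ := hΨ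
  exact ⟨b, hb0, fun ν g₁ g₂ h1 h2 ξ hξ =>
    (h ν g₁ g₂ h1 h2 ξ hξ).trans (hb ν g₁ g₂ h1 h2 ξ hξ)⟩

lemma good_term {α β j0 k0 l0 m0 n0 : ℕ} (h1 : j0 + k0 + l0 + n0 ≤ α + β)
    (h2 : j0 + l0 + m0 ≤ β) : Good α β (tm j0 k0 l0 m0 n0) := by
  refine ⟨fun j k l m n => if j = j0 ∧ k = k0 ∧ l = l0 ∧ m = m0 ∧ n = n0 then 1 else 0,
    ?_, ?_⟩
  · intro j k l m n hcon
    beta_reduce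
    rw [if_neg]
    rintro ⟨rfl, rfl, rfl, rfl, rfl⟩
    exact hcon ⟨h1, h2⟩
  · intro ν g₁ g₂ hg1 hg2 ξ hξ
    rw [sum5_congr (G := fun j k l m n =>
      if j = j0 ∧ k = k0 ∧ l = l0 ∧ m = m0 ∧ n = n0 then
        (calU ν)^[j] (calX^[k] g₁) ξ * xiD2^[l] (deriv^[m] (calX^[n] g₂)) ξ else 0)
      (fun j k l m n _ _ _ _ _ => by beta_reduce; split <;> ring)]
    rw [sum5_delta (by omega) (by omega) (by omega) (by omega) (by omega)]
    rfl

lemma good_sum {α β : ℕ} {ι : Type} (s : Finset ι) (c : ι → ℂ) (Φ : ι → Goodf)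
    (h : ∀ p ∈ s, c p ≠ 0 → Good α β (Φ p)) :
    Good α β (fun ν g₁ g₂ ξ => ∑ p ∈ s, c p * Φ p ν g₁ g₂ ξ) := by
  classical
  set bp : ι → ℕ → ℕ → ℕ → ℕ → ℕ → ℂ := fun p =>
    if hp : p ∈ s ∧ c p ≠ 0 then (h p hp.1 hp.2).choose else fun _ _ _ _ _ => 0 with hbp
  refine ⟨fun j k l m n => ∑ p ∈ s, c p * bp p j k l m n, ?_, ?_⟩
  · intro j k l m n hcon
    beta_reduce
    refine Finset.sum_eq_zero fun p hp => ?_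
    by_cases hc : p ∈ s ∧ c p ≠ 0
    · rw [hbp]
      simp only [dif_pos hc]
      rw [(h p hc.1 hc.2).choose_spec.1 j k l m n hcon]
      ring
    · simp [hbp, dif_neg hc]
  · intro ν g₁ g₂ hg1 hg2 ξ hξ
    beta_reduce
    rw [sum5_congr (G := fun j k l m n => ∑ p ∈ s,
        c p * (bp p j k l m n * (calU ν)^[j] (calX^[k] g₁) ξ *
          xiD2^[l] (deriv^[m] (calX^[n] g₂)) ξ))
      (fun j k l m n _ _ _ _ _ => by
        beta_reduce
        rw [Finset.sum_mul, Finset.sum_mul]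
        exact Finset.sum_congr rfl fun p _ => by ring)]
    rw [sum5_sum]
    refine Finset.sum_congr rfl fun p hp => ?_
    rw [sum5_smul]
    by_cases hc : c p = 0
    · rw [hc, zero_mul, zero_mul]
    · congr 1
      have hspec := (h p hp hc).choose_spec.2 ν g₁ g₂ hg1 hg2 ξ hξ
      rw [hspec, hbp]
      simp only [dif_pos (⟨hp, hc⟩ : p ∈ s ∧ c p ≠ 0)]

lemma good_mono {α β α' β' : ℕ} {Φ : Goodf} (hα : α ≤ α') (hβ : β ≤ β')
    (hΦ : Good α β Φ) : Good α' β' Φ := by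
  obtain ⟨b, hb0, hb⟩ := hΦ
  refine ⟨b, ?_, ?_⟩
  · intro j k l m n hcon
    refine hb0 j k l m n fun ⟨u1, u2⟩ => hcon ⟨by omega, by omega⟩
  · intro ν g₁ g₂ hg1 hg2 ξ hξ
    rw [hb ν g₁ g₂ hg1 hg2 ξ hξ]
    refine (sum5_ext (by omega) (by omega) (by omega) (by omega) (by omega) ?_).symm
    intro j k l m n hor
    have hc : ¬(j + k + l + n ≤ α + β ∧ j + l + m ≤ β) := by omega
    rw [hb0 j k l m n hc]
    ring

lemma good_sum5 {α β : ℕ} (B1 B2 B3 B4 B5 : ℕ) (c : ℕ → ℕ → ℕ → ℕ → ℕ → ℂ)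
    (Φ : ℕ → ℕ → ℕ → ℕ → ℕ → Goodf)
    (h : ∀ j k l m n, j < B1 → k < B2 → l < B3 → m < B4 → n < B5 → c j k l m n ≠ 0 →
      Good α β (Φ j k l m n)) :
    Good α β (fun ν g₁ g₂ ξ => sum5 B1 B2 B3 B4 B5
      (fun j k l m n => c j k l m n * Φ j k l m n ν g₁ g₂ ξ)) := by
  have P5 : ∀ j k l m, j < B1 → k < B2 → l < B3 → m < B4 →
      Good α β (fun ν g₁ g₂ ξ => ∑ n ∈ range B5, c j k l m n * Φ j k l m n ν g₁ g₂ ξ) :=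
    fun j k l m hj hk hl hm => good_sum _ _ _
      (fun n hn hc => h j k l m n hj hk hl hm (mem_range.1 hn) hc)
  have P4 : ∀ j k l, j < B1 → k < B2 → l < B3 →
      Good α β (fun ν g₁ g₂ ξ => ∑ m ∈ range B4, ∑ n ∈ range B5,
        c j k l m n * Φ j k l m n ν g₁ g₂ ξ) := by
    intro j k l hj hk hl
    refine good_congr ?_ (good_sum (range B4) (fun _ => (1 : ℂ))
      (fun m ν g₁ g₂ ξ => ∑ n ∈ range B5, c j k l m n * Φ j k l m n ν g₁ g₂ ξ)
      (fun m hm _ => P5 j k l m hj hk hl (mem_range.1 hm)))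
    intro ν g₁ g₂ _ _ ξ _
    simp
  have P3 : ∀ j k, j < B1 → k < B2 →
      Good α β (fun ν g₁ g₂ ξ => ∑ l ∈ range B3, ∑ m ∈ range B4, ∑ n ∈ range B5,
        c j k l m n * Φ j k l m n ν g₁ g₂ ξ) := by
    intro j k hj hk
    refine good_congr ?_ (good_sum (range B3) (fun _ => (1 : ℂ))
      (fun l ν g₁ g₂ ξ => ∑ m ∈ range B4, ∑ n ∈ range B5,
        c j k l m n * Φ j k l m n ν g₁ g₂ ξ)
      (fun l hl _ => P4 j k l hj hk (mem_range.1 hl)))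
    intro ν g₁ g₂ _ _ ξ _
    simp
  have P2 : ∀ j, j < B1 →
      Good α β (fun ν g₁ g₂ ξ => ∑ k ∈ range B2, ∑ l ∈ range B3, ∑ m ∈ range B4,
        ∑ n ∈ range B5, c j k l m n * Φ j k l m n ν g₁ g₂ ξ) := by
    intro j hj
    refine good_congr ?_ (good_sum (range B2) (fun _ => (1 : ℂ))
      (fun k ν g₁ g₂ ξ => ∑ l ∈ range B3, ∑ m ∈ range B4, ∑ n ∈ range B5,
        c j k l m n * Φ j k l m n ν g₁ g₂ ξ)
      (fun k hk _ => P3 j k hj (mem_range.1 hk)))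
    intro ν g₁ g₂ _ _ ξ _
    simp
  refine good_congr ?_ (good_sum (range B1) (fun _ => (1 : ℂ))
    (fun j ν g₁ g₂ ξ => ∑ k ∈ range B2, ∑ l ∈ range B3, ∑ m ∈ range B4,
      ∑ n ∈ range B5, c j k l m n * Φ j k l m n ν g₁ g₂ ξ)
    (fun j hj _ => P2 j (mem_range.1 hj)))
  intro ν g₁ g₂ _ _ ξ _
  simp [sum5]

end good


section main

lemma good_smul {α β : ℕ} {Φ : Goodf} (c : ℂ) (h : Good α β Φ) :
    Good α β (fun ν g₁ g₂ ξ => c * Φ ν g₁ g₂ ξ) := by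
  refine good_congr ?_ (good_sum (range 1) (fun _ => c) (fun _ => Φ) (fun _ _ _ => h))
  intro ν g₁ g₂ _ _ ξ _
  simp

lemma good_add {α β : ℕ} {Φ Ψ : Goodf} (h1 : Good α β Φ) (h2 : Good α β Ψ) :
    Good α β (fun ν g₁ g₂ ξ => Φ ν g₁ g₂ ξ + Ψ ν g₁ g₂ ξ) := by
  refine good_congr ?_ (good_sum (range 2) (fun _ => (1 : ℂ))
    (fun p => if p = 0 then Φ else Ψ) (fun p _ _ => by beta_reduce; split <;> assumption))
  intro ν g₁ g₂ _ _ ξ _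
  simp [Finset.sum_range_succ]

lemma good_base : ∀ α, Good α 0 (fun ν g₁ g₂ ξ => calX^[α] (fun x => g₁ x * g₂ x) ξ) := by
  intro α
  induction α with
  | zero =>
    refine good_congr ?_ (good_term (α := 0) (β := 0) (j0 := 0) (k0 := 0) (l0 := 0)
      (m0 := 0) (n0 := 0) (by omega) (by omega))
    intro ν g₁ g₂ _ _ ξ _
    rfl
  | succ α ih =>
    obtain ⟨b, hb0, hb⟩ := ih
    beta_reduce at hb
    have G1 : Good (α + 1) 0 (fun ν g₁ g₂ ξ => calX^[α] (fun x => calX g₁ x * g₂ x) ξ) := by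
      refine good_congr ?_ (good_sum5 1 (α + 1) 1 1 (α + 1) b
        (fun j k l m n => tm j (k + 1) l m n) ?_)
      · intro ν g₁ g₂ hg1 hg2 ξ hξ
        beta_reduce
        rw [hb ν (calX g₁) g₂ (opOK_calX.smooth _ hg1) hg2 ξ hξ]
        refine sum5_congr fun j k l m n _ _ _ _ _ => ?_
        simp only [tm]
        rw [← Function.iterate_succ_apply]
        ring
      · intro j k l m n _ _ _ _ _ hbne
        have hcon : j + k + l + n ≤ α + 0 ∧ j + l + m ≤ 0 := by
          by_contra h'; exact hbne (hb0 _ _ _ _ _ h')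
        exact good_term (by omega) (by omega)
    have G2 : Good (α + 1) 0 (fun ν g₁ g₂ ξ => calX^[α] (fun x => g₁ x * calX g₂ x) ξ) := by
      refine good_congr ?_ (good_sum5 1 (α + 1) 1 1 (α + 1) b
        (fun j k l m n => tm j k l m (n + 1)) ?_)
      · intro ν g₁ g₂ hg1 hg2 ξ hξ
        beta_reduce
        rw [hb ν g₁ (calX g₂) hg1 (opOK_calX.smooth _ hg2) ξ hξ]
        refine sum5_congr fun j k l m n _ _ _ _ _ => ?_
        simp only [tm]
        rw [← Function.iterate_succ_apply]
        ring
      · intro j k l m n _ _ _ _ _ hbne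
        have hcon : j + k + l + n ≤ α + 0 ∧ j + l + m ≤ 0 := by
          by_contra h'; exact hbne (hb0 _ _ _ _ _ h')
        exact good_term (by omega) (by omega)
    refine good_congr ?_ (good_add G1 G2)
    intro ν g₁ g₂ hg1 hg2 ξ hξ
    beta_reduce
    rw [Function.iterate_succ_apply]
    have hf1 : Sm (fun x => calX g₁ x * g₂ x) := (opOK_calX.smooth _ hg1).mul hg2
    have hf2 : Sm (fun x => g₁ x * calX g₂ x) := hg1.mul (opOK_calX.smooth _ hg2)
    have e1 : EqS (calX (fun x => g₁ x * g₂ x))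
        (fun x => 1 * (calX g₁ x * g₂ x) + 1 * (g₁ x * calX g₂ x)) := by
      intro x hx
      rw [prodX hg1 hg2 hx]
      ring
    have e2 : calX^[α] (calX fun x => g₁ x * g₂ x) ξ =
        calX^[α] (fun x => 1 * (calX g₁ x * g₂ x) + 1 * (g₁ x * calX g₂ x)) ξ :=
      (opOK_calX.iterate α).congr _ _ e1 hξ
    have e3 : calX^[α] (fun x => 1 * (calX g₁ x * g₂ x) + 1 * (g₁ x * calX g₂ x)) ξ =
        1 * calX^[α] (fun x => calX g₁ x * g₂ x) ξ + 1 * calX^[α] (fun x => g₁ x * calX g₂ x) ξ :=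
      (opOK_calX.iterate α).lin2 1 1 _ _ hf1 hf2 hξ
    rw [e2, e3]
    ring


lemma good_main : ∀ β α, Good α β
    (fun ν g₁ g₂ ξ => (calU ν)^[β] (calX^[α] (fun x => g₁ x * g₂ x)) ξ) := by
  intro β
  induction β with
  | zero =>
    intro α
    exact good_congr (fun ν g₁ g₂ _ _ ξ _ => rfl) (good_base α)
  | succ β ihβ =>
    intro α
    obtain ⟨a, ha0, ha⟩ := LUX α
    choose aXU hXU0 hXU using LXU
    choose aXD hXD0 hXD using LXD
    choose aXK hXK0 hXK using LXK
    -- the three Good families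
    have hA : ∀ i, i ≤ α → Good α (β + 1)
        (fun ν g₁ g₂ ξ => (calU ν)^[β] (calX^[i] (fun x => calU ν g₁ x * g₂ x)) ξ) := by
      intro i hi
      obtain ⟨b, hb0, hb⟩ := ihβ i
      beta_reduce at hb
      refine good_congr ?_ (good_sum5 (β + 1) (i + β + 1) (β + 1) (β + 1) (i + β + 1) b
        (fun j k l m n ν g₁ g₂ ξ =>
          ∑ s ∈ range (k + 1), aXU k s * tm (j + 1) s l m n ν g₁ g₂ ξ) ?_)
      · intro ν g₁ g₂ hg1 hg2 ξ hξ
        beta_reduce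
        rw [hb ν (calU ν g₁) g₂ ((opOK_calU ν).smooth _ hg1) hg2 ξ hξ]
        refine sum5_congr fun j k l m n _ _ _ _ _ => ?_
        have e : (calU ν)^[j] (calX^[k] (calU ν g₁)) ξ =
            ∑ s ∈ range (k + 1), aXU k s * (calU ν)^[j + 1] (calX^[s] g₁) ξ := by
          have e1 : EqS (calX^[k] (calU ν g₁))
              (fun x => ∑ s ∈ range (k + 1), aXU k s * calU ν (calX^[s] g₁) x) :=
            fun x hx => hXU k ν g₁ hg1 x hx
          rw [((opOK_calU ν).iterate j).congr _ _ e1 hξ,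
            ((opOK_calU ν).iterate j).lin _ _ _
              (fun s _ => (opOK_calU ν).smooth _ ((opOK_calX.iterate s).smooth _ hg1)) hξ]
          exact Finset.sum_congr rfl fun s _ => by rw [← Function.iterate_succ_apply]
        rw [e, Finset.mul_sum, Finset.sum_mul, Finset.mul_sum]
        exact Finset.sum_congr rfl fun s _ => by simp only [tm]; ring
      · intro j k l m n _ _ _ _ _ hbne
        have hcon : j + k + l + n ≤ i + β ∧ j + l + m ≤ β := by
          by_contra h'; exact hbne (hb0 _ _ _ _ _ h')
        refine good_sum (range (k + 1)) (fun s => aXU k s) (fun s => tm (j + 1) s l m n)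
          (fun s hs _ => good_term (by have := mem_range.1 hs; omega) (by omega))
    have hB : ∀ i, i ≤ α → Good α (β + 1)
        (fun ν g₁ g₂ ξ => (calU ν)^[β] (calX^[i] (fun x => calX g₁ x * deriv g₂ x)) ξ) := by
      intro i hi
      obtain ⟨b, hb0, hb⟩ := ihβ i
      beta_reduce at hb
      refine good_congr ?_ (good_sum5 (β + 1) (i + β + 1) (β + 1) (β + 1) (i + β + 1) b
        (fun j k l m n ν g₁ g₂ ξ =>
          ∑ t ∈ range (n + 1), aXD n t * tm j (k + 1) l (m + 1) t ν g₁ g₂ ξ) ?_)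
      · intro ν g₁ g₂ hg1 hg2 ξ hξ
        beta_reduce
        rw [hb ν (calX g₁) (deriv g₂) (opOK_calX.smooth _ hg1) hg2.deriv ξ hξ]
        refine sum5_congr fun j k l m n _ _ _ _ _ => ?_
        have e : xiD2^[l] (deriv^[m] (calX^[n] (deriv g₂))) ξ =
            ∑ t ∈ range (n + 1), aXD n t * xiD2^[l] (deriv^[m + 1] (calX^[t] g₂)) ξ := by
          have e1 : EqS (calX^[n] (deriv g₂))
              (fun x => ∑ t ∈ range (n + 1), aXD n t * deriv (calX^[t] g₂) x) :=
            fun x hx => hXD n g₂ hg2 x hx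
          have e2 : EqS (deriv^[m] (calX^[n] (deriv g₂)))
              (fun x => ∑ t ∈ range (n + 1), aXD n t * deriv^[m + 1] (calX^[t] g₂) x) := by
            intro x hx
            rw [(opOK_deriv.iterate m).congr _ _ e1 hx,
              (opOK_deriv.iterate m).lin _ _ _
                (fun t _ => ((opOK_calX.iterate t).smooth _ hg2).deriv) hx]
            exact Finset.sum_congr rfl fun t _ => by rw [← Function.iterate_succ_apply]
          rw [(opOK_xiD2.iterate l).congr _ _ e2 hξ,
            (opOK_xiD2.iterate l).lin _ _ _
              (fun t _ => (opOK_deriv.iterate (m + 1)).smooth _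
                ((opOK_calX.iterate t).smooth _ hg2)) hξ]
        have e' : (calU ν)^[j] (calX^[k] (calX g₁)) ξ = (calU ν)^[j] (calX^[k + 1] g₁) ξ := by
          rw [← Function.iterate_succ_apply]
        rw [e, e', Finset.mul_sum, Finset.mul_sum]
        exact Finset.sum_congr rfl fun t _ => by simp only [tm]; ring
      · intro j k l m n _ _ _ _ _ hbne
        have hcon : j + k + l + n ≤ i + β ∧ j + l + m ≤ β := by
          by_contra h'; exact hbne (hb0 _ _ _ _ _ h')
        refine good_sum (range (n + 1)) (fun t => aXD n t) (fun t => tm j (k + 1) l (m + 1) t)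
          (fun t ht _ => good_term (by have := mem_range.1 ht; omega) (by omega))
    have hC : ∀ i, i ≤ α → Good α (β + 1)
        (fun ν g₁ g₂ ξ => (calU ν)^[β] (calX^[i] (fun x => g₁ x * xiD2 g₂ x)) ξ) := by
      intro i hi
      obtain ⟨b, hb0, hb⟩ := ihβ i
      beta_reduce at hb
      refine good_congr ?_ (good_sum5 (β + 1) (i + β + 1) (β + 1) (β + 1) (i + β + 1) b
        (fun j k l m n ν g₁ g₂ ξ =>
          (∑ u ∈ range (n + 1), aXK n u * tm j k (l + 1) m u ν g₁ g₂ ξ) +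
            ∑ u ∈ range (n + 1), (aXK n u * (m : ℂ)) * tm j k l (m + 1) u ν g₁ g₂ ξ) ?_)
      · intro ν g₁ g₂ hg1 hg2 ξ hξ
        beta_reduce
        rw [hb ν g₁ (xiD2 g₂) hg1 (opOK_xiD2.smooth _ hg2) ξ hξ]
        refine sum5_congr fun j k l m n _ _ _ _ _ => ?_
        have hXu : ∀ u : ℕ, Sm (calX^[u] g₂) := fun u => (opOK_calX.iterate u).smooth _ hg2
        have e : xiD2^[l] (deriv^[m] (calX^[n] (xiD2 g₂))) ξ =
            (∑ u ∈ range (n + 1), aXK n u * xiD2^[l + 1] (deriv^[m] (calX^[u] g₂)) ξ) +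
              ∑ u ∈ range (n + 1), (aXK n u * (m : ℂ)) *
                xiD2^[l] (deriv^[m + 1] (calX^[u] g₂)) ξ := by
          have e1 : EqS (calX^[n] (xiD2 g₂))
              (fun x => ∑ u ∈ range (n + 1), aXK n u * xiD2 (calX^[u] g₂) x) :=
            fun x hx => hXK n g₂ hg2 x hx
          have e2 : EqS (deriv^[m] (calX^[n] (xiD2 g₂)))
              (fun x => 1 * (∑ u ∈ range (n + 1), aXK n u *
                  xiD2 (deriv^[m] (calX^[u] g₂)) x) +
                1 * (∑ u ∈ range (n + 1), (aXK n u * (m : ℂ)) *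
                  deriv^[m + 1] (calX^[u] g₂) x)) := by
            intro x hx
            rw [(opOK_deriv.iterate m).congr _ _ e1 hx,
              (opOK_deriv.iterate m).lin _ _ _
                (fun u _ => opOK_xiD2.smooth _ (hXu u)) hx]
            beta_reduce
            rw [one_mul, one_mul, ← Finset.sum_add_distrib]
            refine Finset.sum_congr rfl fun u _ => ?_
            rw [LDK m (calX^[u] g₂) (hXu u) x hx]
            ring
          have hF1 : Sm (fun x => ∑ u ∈ range (n + 1), aXK n u *
              xiD2 (deriv^[m] (calX^[u] g₂)) x) :=
            Sm.sum _ _ _ (fun u _ => opOK_xiD2.smooth _ ((opOK_deriv.iterate m).smooth _ (hXu u)))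
          have hF2 : Sm (fun x => ∑ u ∈ range (n + 1), (aXK n u * (m : ℂ)) *
              deriv^[m + 1] (calX^[u] g₂) x) :=
            Sm.sum _ _ _ (fun u _ => (opOK_deriv.iterate (m + 1)).smooth _ (hXu u))
          rw [(opOK_xiD2.iterate l).congr _ _ e2 hξ,
            (opOK_xiD2.iterate l).lin2 1 1 _ _ hF1 hF2 hξ]
          beta_reduce
          rw [one_mul, one_mul,
            (opOK_xiD2.iterate l).lin _ _ _
              (fun u _ => opOK_xiD2.smooth _ ((opOK_deriv.iterate m).smooth _ (hXu u))) hξ,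
            (opOK_xiD2.iterate l).lin _ _ _
              (fun u _ => (opOK_deriv.iterate (m + 1)).smooth _ (hXu u)) hξ]
          beta_reduce
          congr 1
        rw [e]
        simp only [tm, mul_add, Finset.mul_sum, Finset.sum_mul]
        congr 1 <;> exact Finset.sum_congr rfl fun u _ => by ring
      · intro j k l m n _ _ _ _ _ hbne
        have hcon : j + k + l + n ≤ i + β ∧ j + l + m ≤ β := by
          by_contra h'; exact hbne (hb0 _ _ _ _ _ h')
        refine good_add
          (good_sum (range (n + 1)) (fun u => aXK n u) (fun u => tm j k (l + 1) m u)
            (fun u hu _ => good_term (by have := mem_range.1 hu; omega) (by omega)))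
          (good_sum (range (n + 1)) (fun u => aXK n u * (m : ℂ)) (fun u => tm j k l (m + 1) u)
            (fun u hu _ => good_term (by have := mem_range.1 hu; omega) (by omega)))
    -- combine the three families
    have hComb : ∀ i ∈ range (α + 1), (a i ≠ 0) → Good α (β + 1)
        (fun ν g₁ g₂ ξ =>
          (calU ν)^[β] (calX^[i] (fun x => calU ν g₁ x * g₂ x)) ξ +
            Complex.I * (calU ν)^[β] (calX^[i] (fun x => calX g₁ x * deriv g₂ x)) ξ +
            (-Complex.I) * (calU ν)^[β] (calX^[i] (fun x => g₁ x * xiD2 g₂ x)) ξ) := by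
      intro i hi _
      have hi' : i ≤ α := by have := mem_range.1 hi; omega
      exact good_add (good_add (hA i hi') (good_smul Complex.I (hB i hi')))
        (good_smul (-Complex.I) (hC i hi'))
    refine good_congr ?_ (good_sum (range (α + 1)) a _ hComb)
    -- the pointwise identity
    intro ν g₁ g₂ hg1 hg2 ξ hξ
    beta_reduce
    rw [Function.iterate_succ_apply]
    have hG : Sm (fun x => g₁ x * g₂ x) := hg1.mul hg2
    have hP1 : Sm (fun x => calU ν g₁ x * g₂ x) := ((opOK_calU ν).smooth _ hg1).mul hg2
    have hP2 : Sm (fun x => calX g₁ x * deriv g₂ x) := (opOK_calX.smooth _ hg1).mul hg2.deriv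
    have hP3 : Sm (fun x => g₁ x * xiD2 g₂ x) := hg1.mul (opOK_xiD2.smooth _ hg2)
    have e1 : EqS (calU ν (calX^[α] (fun x => g₁ x * g₂ x)))
        (fun x => ∑ i ∈ range (α + 1), a i *
          calX^[i] (calU ν (fun y => g₁ y * g₂ y)) x) :=
      fun x hx => ha ν _ hG x hx
    have eU : EqS (calU ν (fun y => g₁ y * g₂ y))
        (fun x => 1 * (calU ν g₁ x * g₂ x) + Complex.I * (calX g₁ x * deriv g₂ x) +
          (-Complex.I) * (g₁ x * xiD2 g₂ x)) := by
      intro x hx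
      rw [prodU hg1 hg2 hx]
      ring
    have e2 : ∀ i, calX^[i] (calU ν (fun y => g₁ y * g₂ y)) ξ =
        1 * calX^[i] (fun x => calU ν g₁ x * g₂ x) ξ +
          Complex.I * calX^[i] (fun x => calX g₁ x * deriv g₂ x) ξ +
          (-Complex.I) * calX^[i] (fun x => g₁ x * xiD2 g₂ x) ξ := by
      intro i
      rw [(opOK_calX.iterate i).congr _ _ eU hξ,
        (opOK_calX.iterate i).lin3 1 Complex.I (-Complex.I) _ _ _ hP1 hP2 hP3 hξ]
    -- apply U^[β]
    have e3 : (calU ν)^[β] (calU ν (calX^[α] (fun x => g₁ x * g₂ x))) ξ =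
        ∑ i ∈ range (α + 1), a i *
          (calU ν)^[β] (calX^[i] (calU ν (fun y => g₁ y * g₂ y))) ξ := by
      rw [((opOK_calU ν).iterate β).congr _ _ e1 hξ,
        ((opOK_calU ν).iterate β).lin _ _ _
          (fun i _ => (opOK_calX.iterate i).smooth _ ((opOK_calU ν).smooth _ hG)) hξ]
    rw [e3]
    refine Finset.sum_congr rfl fun i _ => ?_
    congr 1
    have eU2 : EqS (calX^[i] (calU ν (fun y => g₁ y * g₂ y)))
        (fun x => 1 * calX^[i] (fun y => calU ν g₁ y * g₂ y) x +
          Complex.I * calX^[i] (fun y => calX g₁ y * deriv g₂ y) x +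
          (-Complex.I) * calX^[i] (fun y => g₁ y * xiD2 g₂ y) x) := by
      intro x hx
      rw [(opOK_calX.iterate i).congr _ _ eU hx,
        (opOK_calX.iterate i).lin3 1 Complex.I (-Complex.I) _ _ _ hP1 hP2 hP3 hx]
    rw [((opOK_calU ν).iterate β).congr _ _ eU2 hξ,
      ((opOK_calU ν).iterate β).lin3 1 Complex.I (-Complex.I) _ _ _
        ((opOK_calX.iterate i).smooth _ hP1) ((opOK_calX.iterate i).smooth _ hP2)
        ((opOK_calX.iterate i).smooth _ hP3) hξ]
    beta_reduce
    rw [one_mul]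

end main

end Leib

/-- Leibniz-type formula for `𝒰^β 𝒳^α` applied to a product: there are coefficients
`b^{(α,β)}_{j,k,l,m,n}`, supported on indices with `j+k+l+n ≤ α+β` and `j+l+m ≤ β`,
such that `𝒰^β 𝒳^α (g₁·g₂) = Σ b · (𝒰^j 𝒳^k g₁) · ((ξ d²/dξ²)^l (d/dξ)^m 𝒳^n g₂)`. -/
theorem calU_calX_leibniz (α β : ℕ) :
    ∃ b : ℕ → ℕ → ℕ → ℕ → ℕ → ℂ,
      (∀ j k l m n, ¬(j + k + l + n ≤ α + β ∧ j + l + m ≤ β) → b j k l m n = 0) ∧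
      ∀ (ν : ℂ) (g₁ g₂ : ℝ → ℂ),
        ContDiffOn ℝ (⊤ : ℕ∞) g₁ {(0 : ℝ)}ᶜ →
        ContDiffOn ℝ (⊤ : ℕ∞) g₂ {(0 : ℝ)}ᶜ →
        ∀ ξ : ℝ, ξ ≠ 0 →
          (calU ν)^[β] (calX^[α] (fun x => g₁ x * g₂ x)) ξ =
            ∑ j ∈ range (β + 1), ∑ k ∈ range (α + β + 1), ∑ l ∈ range (β + 1),
              ∑ m ∈ range (β + 1), ∑ n ∈ range (α + β + 1),
                b j k l m n * ((calU ν)^[j] (calX^[k] g₁) ξ) *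
                  (xiD2^[l] (deriv^[m] (calX^[n] g₂)) ξ) := by
  obtain ⟨b, hb0, hb⟩ := Leib.good_main β α
  refine ⟨b, hb0, ?_⟩
  intro ν g₁ g₂ hg1 hg2 ξ hξ
  exact hb ν g₁ g₂ hg1 hg2 ξ hξ
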